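/- arXiv:1204.0383 — 5 statements merged into one kernel-verified Lean document; each statement's English description precedes it below -/
import Mathlib

section
/- Let R_1 ⊆ (K^×)^3 be a system of representatives for the orbits of (K^×)^3 under the diagonal scalar-multiplication action of F, and let R_2 ⊆ (K^×)^6 be a system of representatives for the quotient group (K^×)^6 / H. Then R := R_1 × R_2 ⊆ (K^×)^9 is a system of representatives for the orbits of (K^×)^9 under the action ⊙ of F^7. -/
open NumberField

/-- The subgroup `F` of `K^×` generated by (the images of) a fixed system of fundamental
units of `O_K`; here we take Mathlib's fixed fundamental system `fundSystem K`. -/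
noncomputable def unitsF (K : Type) [Field K] [NumberField K] : Subgroup Kˣ :=
  Subgroup.map (Units.map (algebraMap (RingOfIntegers K) K).toMonoidHom)
    (Subgroup.closure (Set.range (NumberField.Units.fundSystem K)))

/- Points of `(K^×)⁹` are written as pairs
`((y₁, y₂, y₃), (y₁₂, y₂₁, y₂₃, y₃₂, y₃₁, y₁₃))`. -/

/-- The subgroup(-set) `H` of `(K^×)⁶` (coordinates `(α₁₂, α₂₁, α₂₃, α₃₂, α₃₁, α₁₃)`):
all tuples in `F⁶` for which `α₁₂ α₂₁² α₂₃ α₃₂² α₃₁ α₁₃²` is a cube in `F`. -/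
def Hset (K : Type) [Field K] [NumberField K] : Set (Kˣ × Kˣ × Kˣ × Kˣ × Kˣ × Kˣ) :=
  {α | α.1 ∈ unitsF K ∧ α.2.1 ∈ unitsF K ∧ α.2.2.1 ∈ unitsF K ∧ α.2.2.2.1 ∈ unitsF K ∧
    α.2.2.2.2.1 ∈ unitsF K ∧ α.2.2.2.2.2 ∈ unitsF K ∧
    ∃ ξ ∈ unitsF K,
      α.1 * α.2.1 ^ 2 * α.2.2.1 * α.2.2.2.1 ^ 2 * α.2.2.2.2.1 * α.2.2.2.2.2 ^ 2 = ξ ^ 3}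

/-- The action `⊙` of an element `(ζ, ζ₁, ζ₂, ζ₃, ζ₂₁, ζ₃₂, ζ₁₃)` of `F⁷` on a point
`((y₁,y₂,y₃),(y₁₂,y₂₁,y₂₃,y₃₂,y₃₁,y₁₃))` of `(K^×)⁹`. -/
def act (K : Type) [Field K] (ζ ζ₁ ζ₂ ζ₃ ζ₂₁ ζ₃₂ ζ₁₃ : Kˣ)
    (y : (Kˣ × Kˣ × Kˣ) × (Kˣ × Kˣ × Kˣ × Kˣ × Kˣ × Kˣ)) :
    (Kˣ × Kˣ × Kˣ) × (Kˣ × Kˣ × Kˣ × Kˣ × Kˣ × Kˣ) :=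
  ((ζ₁ * y.1.1, ζ₂ * y.1.2.1, ζ₃ * y.1.2.2),
    (ζ * (ζ₂ ^ 2)⁻¹ * ζ₃₂⁻¹ * ζ₁⁻¹ * ζ₂₁⁻¹ * y.2.1,
     ζ₂₁ * y.2.2.1,
     ζ * (ζ₃ ^ 2)⁻¹ * ζ₁₃⁻¹ * ζ₂⁻¹ * ζ₃₂⁻¹ * y.2.2.2.1,
     ζ₃₂ * y.2.2.2.2.1,
     ζ * (ζ₁ ^ 2)⁻¹ * ζ₂₁⁻¹ * ζ₃⁻¹ * ζ₁₃⁻¹ * y.2.2.2.2.2.1,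
     ζ₁₃ * y.2.2.2.2.2.2))

lemma mem_prodpow (K : Type) [Field K] [NumberField K] {u : (𝓞 K)ˣ}
    (hu : u ∈ Subgroup.closure (Set.range (NumberField.Units.fundSystem K))) :
    ∃ n : Fin (Units.rank K) → ℤ, u = ∏ i, (Units.fundSystem K i) ^ (n i) := by
  refine Subgroup.closure_induction ?_ ?_ ?_ ?_ hu
  · rintro x ⟨i, rfl⟩
    exact ⟨Pi.single i 1, by
      rw [Finset.prod_eq_single i (fun j _ hj => by simp [Pi.single_eq_of_ne hj])
        (by simp)]
      simp⟩
  · exact ⟨0, by simp⟩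
  · rintro x y - - ⟨n, rfl⟩ ⟨m, rfl⟩
    exact ⟨n + m, by rw [← Finset.prod_mul_distrib]; simp [zpow_add]⟩
  · rintro x - ⟨n, rfl⟩
    exact ⟨-n, by rw [← Finset.prod_inv_distrib]; simp [zpow_neg]⟩

lemma unitsF_tf (K : Type) [Field K] [NumberField K] {ζ : Kˣ}
    (h1 : ζ ∈ unitsF K) (h3 : ζ ^ 3 = 1) : ζ = 1 := by
  obtain ⟨u, hu, rfl⟩ := h1
  obtain ⟨n, rfl⟩ := mem_prodpow K hu
  have hinj : Function.Injective
      (Units.map (algebraMap (RingOfIntegers K) K).toMonoidHom) :=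
    Units.map_injective RingOfIntegers.coe_injective
  have h3' : (∏ i, (Units.fundSystem K i) ^ (n i)) ^ 3 = 1 := by
    apply hinj; rw [map_pow, map_one]; exact h3
  have key := Units.exist_unique_eq_mul_prod K 1
  have e1 : (1 : (𝓞 K)ˣ) = ((1 : Units.torsion K) : (𝓞 K)ˣ) *
      ∏ i, (Units.fundSystem K i) ^ ((fun i => 3 * n i) i) := by
    rw [← h3', ← Finset.prod_pow]
    simp only [OneMemClass.coe_one, Subgroup.coe_one, one_mul]
    refine Finset.prod_congr rfl fun i _ => ?_
    rw [← zpow_natCast, ← zpow_mul]; congr 1; push_cast; ring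
  have e2 : (1 : (𝓞 K)ˣ) = ((1 : Units.torsion K) : (𝓞 K)ˣ) *
      ∏ i, (Units.fundSystem K i) ^ ((fun _ => (0:ℤ)) i) := by simp
  have huniq := key.unique (y₁ := (1, fun i => 3 * n i)) (y₂ := (1, fun _ => 0)) e1 e2
  have hn : ∀ i, n i = 0 := by
    intro i
    have := congrFun (congrArg Prod.snd huniq) i
    simpa using this
  have : ∏ i, (Units.fundSystem K i) ^ (n i) = 1 := by simp [hn]
  rw [this, map_one]

lemma act_act (K : Type) [Field K] (a b c d e f g a' b' c' d' e' f' g' : Kˣ)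
    (y : (Kˣ × Kˣ × Kˣ) × (Kˣ × Kˣ × Kˣ × Kˣ × Kˣ × Kˣ)) :
    act K a b c d e f g (act K a' b' c' d' e' f' g' y) =
      act K (a*a') (b*b') (c*c') (d*d') (e*e') (f*f') (g*g') y := by
  simp only [act, Prod.mk.injEq]
  refine ⟨⟨?_, ?_, ?_⟩, ?_, ?_, ?_, ?_, ?_, ?_⟩ <;>
    · rw [Units.ext_iff]; push_cast; try field_simp

lemma act_one (K : Type) [Field K]
    (y : (Kˣ × Kˣ × Kˣ) × (Kˣ × Kˣ × Kˣ × Kˣ × Kˣ × Kˣ)) :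
    act K 1 1 1 1 1 1 1 y = y := by
  simp [act]

section keys
variable {K : Type} [Field K]

lemma keyE1 (ν ξ A C h12 h21 h23 h32 h13 : Kˣ)
    (hA : A = h12*h21*h32*(h23*h32*h13)*ξ⁻¹*ξ⁻¹) (hC : C = h12*h21*h32*ξ⁻¹) :
    ν^3 * (ξ * A * C) * (ν^2)⁻¹ * h32⁻¹ * (ν*A)⁻¹ * h21⁻¹ = h12 := by
  subst hA hC; rw [Units.ext_iff]; push_cast; field_simp

lemma keyE2 (ν ξ A C h12 h21 h23 h32 h13 : Kˣ)
    (hA : A = h12*h21*h32*(h23*h32*h13)*ξ⁻¹*ξ⁻¹) (hC : C = h12*h21*h32*ξ⁻¹) :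
    ν^3 * (ξ * A * C) * ((ν*C)^2)⁻¹ * h13⁻¹ * ν⁻¹ * h32⁻¹ = h23 := by
  subst hA hC; rw [Units.ext_iff]; push_cast; field_simp

lemma keyE3 (ν ξ A C h12 h21 h23 h32 h31 h13 : Kˣ)
    (hA : A = h12*h21*h32*(h23*h32*h13)*ξ⁻¹*ξ⁻¹) (hC : C = h12*h21*h32*ξ⁻¹)
    (hξ : h12 * h21^2 * h23 * h32^2 * h31 * h13^2 = ξ^3) :
    ν^3 * (ξ * A * C) * ((ν*A)^2)⁻¹ * h21⁻¹ * (ν*C)⁻¹ * h13⁻¹ = h31 := by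
  subst hA hC
  have step : ν^3 * (ξ * (h12*h21*h32*(h23*h32*h13)*ξ⁻¹*ξ⁻¹) * (h12*h21*h32*ξ⁻¹)) *
      ((ν*(h12*h21*h32*(h23*h32*h13)*ξ⁻¹*ξ⁻¹))^2)⁻¹ * h21⁻¹ * (ν*(h12*h21*h32*ξ⁻¹))⁻¹ * h13⁻¹
      = ξ^3 * (h12 * h21^2 * h23 * h32^2 * h13^2)⁻¹ := by
    rw [Units.ext_iff]; push_cast; field_simp
  rw [step, ← hξ, Units.ext_iff]; push_cast; field_simp

lemma keyCube (B0 B1 B2 B3 B21 B32 B13 : Kˣ) :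
    (B0 * (B2^2)⁻¹ * B32⁻¹ * B1⁻¹ * B21⁻¹) * B21^2 * (B0 * (B3^2)⁻¹ * B13⁻¹ * B2⁻¹ * B32⁻¹)
      * B32^2 * (B0 * (B1^2)⁻¹ * B21⁻¹ * B3⁻¹ * B13⁻¹) * B13^2
      = (B0 * (B1*B2*B3)⁻¹)^3 := by
  rw [Units.ext_iff]; push_cast; field_simp

lemma keySolve (x a b : Kˣ) (h : x * (a^2)⁻¹ * 1⁻¹ * b⁻¹ * 1⁻¹ = 1) : x = b * a^2 := by
  rw [Units.ext_iff] at h ⊢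
  push_cast at h ⊢
  field_simp at h ⊢
  linear_combination h

end keys


set_option maxHeartbeats 1000000 in
/-- Lemma 2.4: if `R₁` is a system of representatives for the orbits of
`(K^×)³` under the diagonal scalar multiplication action of `F` and `R₂` is a system of
representatives for `(K^×)⁶/H`, then `R₁ × R₂` is a system of representatives for the
orbits of `(K^×)⁹` under the action `⊙` of `F⁷`. -/
theorem stmt5 (K : Type) [Field K] [NumberField K]
    (R₁ : Set (Kˣ × Kˣ × Kˣ)) (R₂ : Set (Kˣ × Kˣ × Kˣ × Kˣ × Kˣ × Kˣ))
    (hR₁ : ∀ y : Kˣ × Kˣ × Kˣ, ∃! z, z ∈ R₁ ∧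
      ∃ ζ ∈ unitsF K, z = (ζ * y.1, ζ * y.2.1, ζ * y.2.2))
    (hR₂ : ∀ y : Kˣ × Kˣ × Kˣ × Kˣ × Kˣ × Kˣ, ∃! z, z ∈ R₂ ∧ ∃ h ∈ Hset K, z = h * y) :
    ∀ y : (Kˣ × Kˣ × Kˣ) × (Kˣ × Kˣ × Kˣ × Kˣ × Kˣ × Kˣ),
      ∃! z, z ∈ R₁ ×ˢ R₂ ∧
        ∃ ζ ∈ unitsF K, ∃ ζ₁ ∈ unitsF K, ∃ ζ₂ ∈ unitsF K, ∃ ζ₃ ∈ unitsF K,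
          ∃ ζ₂₁ ∈ unitsF K, ∃ ζ₃₂ ∈ unitsF K, ∃ ζ₁₃ ∈ unitsF K,
            z = act K ζ ζ₁ ζ₂ ζ₃ ζ₂₁ ζ₃₂ ζ₁₃ y := by
  rintro ⟨⟨a1, a2, a3⟩, b12, b21, b23, b32, b31, b13⟩
  obtain ⟨z2, ⟨hz2R, ⟨h12, h21, h23, h32, h31, h13⟩, hvecH, hz2⟩, -⟩ :=
    hR₂ (b12, b21, b23, b32, b31, b13)
  obtain ⟨c12, c21, c23, c32, c31, c13⟩ := z2
  simp only [Hset, Set.mem_setOf_eq] at hvecH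
  obtain ⟨m12, m21, m23, m32, m31, m13, ξ, mξ, hξ⟩ := hvecH
  simp only [Prod.mk_mul_mk, Prod.mk.injEq] at hz2
  obtain ⟨hc12, hc21, hc23, hc32, hc31, hc13⟩ := hz2
  obtain ⟨z1, ⟨hz1R, ν, hν, hz1⟩, -⟩ :=
    hR₁ (h12 * h21 * h32 * (h23 * h32 * h13) * ξ⁻¹ * ξ⁻¹ * a1, a2,
         h12 * h21 * h32 * ξ⁻¹ * a3)
  obtain ⟨e1, e2, e3⟩ := z1
  simp only [Prod.mk.injEq] at hz1
  obtain ⟨he1, he2, he3⟩ := hz1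
  set A : Kˣ := h12 * h21 * h32 * (h23 * h32 * h13) * ξ⁻¹ * ξ⁻¹ with hA
  set C : Kˣ := h12 * h21 * h32 * ξ⁻¹ with hC
  have hAF : A ∈ unitsF K := by
    rw [hA]
    exact mul_mem (mul_mem (mul_mem (mul_mem (mul_mem m12 m21) m32)
      (mul_mem (mul_mem m23 m32) m13)) (inv_mem mξ)) (inv_mem mξ)
  have hCF : C ∈ unitsF K := by
    rw [hC]
    exact mul_mem (mul_mem (mul_mem m12 m21) m32) (inv_mem mξ)
  have hzeq : (((e1, e2, e3), (c12, c21, c23, c32, c31, c13)) :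
      (Kˣ × Kˣ × Kˣ) × (Kˣ × Kˣ × Kˣ × Kˣ × Kˣ × Kˣ)) =
      act K (ν ^ 3 * (ξ * A * C)) (ν * A) ν (ν * C) h21 h32 h13
        ((a1, a2, a3), b12, b21, b23, b32, b31, b13) := by
    simp only [act, Prod.mk.injEq]
    refine ⟨⟨?_, ?_, ?_⟩, ?_, ?_, ?_, ?_, ?_, ?_⟩
    · rw [he1]; exact (mul_assoc _ _ _).symm
    · exact he2
    · rw [he3]; exact (mul_assoc _ _ _).symm
    · rw [hc12, keyE1 ν ξ A C h12 h21 h23 h32 h13 hA hC]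
    · exact hc21
    · rw [hc23, keyE2 ν ξ A C h12 h21 h23 h32 h13 hA hC]
    · exact hc32
    · rw [hc31, keyE3 ν ξ A C h12 h21 h23 h32 h31 h13 hA hC hξ]
    · exact hc13
  refine ⟨((e1, e2, e3), (c12, c21, c23, c32, c31, c13)),
    ⟨Set.mk_mem_prod hz1R hz2R,
      ν ^ 3 * (ξ * A * C), mul_mem (pow_mem hν 3) (mul_mem (mul_mem mξ hAF) hCF),
      ν * A, mul_mem hν hAF, ν, hν, ν * C, mul_mem hν hCF,
      h21, m21, h32, m32, h13, m13, hzeq⟩, ?_⟩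
  -- uniqueness
  rintro ⟨⟨w1, w2, w3⟩, w12, w21, w23, w32, w31, w13⟩
    ⟨⟨hw1R, hw2R⟩, P, hP, P1, hP1, P2, hP2, P3, hP3, P21, hP21, P32, hP32, P13, hP13, hw⟩
  have hZF : ν ^ 3 * (ξ * A * C) ∈ unitsF K :=
    mul_mem (pow_mem hν 3) (mul_mem (mul_mem mξ hAF) hCF)
  have hZ1F : ν * A ∈ unitsF K := mul_mem hν hAF
  have hZ3F : ν * C ∈ unitsF K := mul_mem hν hCF
  have hy : (((a1, a2, a3), b12, b21, b23, b32, b31, b13) :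
      (Kˣ × Kˣ × Kˣ) × (Kˣ × Kˣ × Kˣ × Kˣ × Kˣ × Kˣ)) =
      act K (ν ^ 3 * (ξ * A * C))⁻¹ (ν * A)⁻¹ ν⁻¹ (ν * C)⁻¹ h21⁻¹ h32⁻¹ h13⁻¹
        ((e1, e2, e3), (c12, c21, c23, c32, c31, c13)) := by
    rw [hzeq, act_act]
    simp only [inv_mul_cancel]
    rw [act_one]
  have hw2 : (((w1, w2, w3), w12, w21, w23, w32, w31, w13) :
      (Kˣ × Kˣ × Kˣ) × (Kˣ × Kˣ × Kˣ × Kˣ × Kˣ × Kˣ)) =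
      act K (P * (ν ^ 3 * (ξ * A * C))⁻¹) (P1 * (ν * A)⁻¹) (P2 * ν⁻¹) (P3 * (ν * C)⁻¹)
        (P21 * h21⁻¹) (P32 * h32⁻¹) (P13 * h13⁻¹)
        ((e1, e2, e3), (c12, c21, c23, c32, c31, c13)) := by
    rw [← act_act, ← hy]; exact hw
  set B0 : Kˣ := P * (ν ^ 3 * (ξ * A * C))⁻¹ with hB0def
  set B1 : Kˣ := P1 * (ν * A)⁻¹ with hB1def
  set B2 : Kˣ := P2 * ν⁻¹ with hB2def
  set B3 : Kˣ := P3 * (ν * C)⁻¹ with hB3def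
  set B21 : Kˣ := P21 * h21⁻¹ with hB21def
  set B32 : Kˣ := P32 * h32⁻¹ with hB32def
  set B13 : Kˣ := P13 * h13⁻¹ with hB13def
  have hB0F : B0 ∈ unitsF K := mul_mem hP (inv_mem hZF)
  have hB1F : B1 ∈ unitsF K := mul_mem hP1 (inv_mem hZ1F)
  have hB2F : B2 ∈ unitsF K := mul_mem hP2 (inv_mem hν)
  have hB3F : B3 ∈ unitsF K := mul_mem hP3 (inv_mem hZ3F)
  have hB21F : B21 ∈ unitsF K := mul_mem hP21 (inv_mem m21)
  have hB32F : B32 ∈ unitsF K := mul_mem hP32 (inv_mem m32)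
  have hB13F : B13 ∈ unitsF K := mul_mem hP13 (inv_mem m13)
  simp only [act, Prod.mk.injEq] at hw2
  obtain ⟨⟨hw1e, hw2e, hw3e⟩, hw12, hw21, hw23, hw32, hw31, hw13⟩ := hw2
  have hαH : ((B0 * (B2 ^ 2)⁻¹ * B32⁻¹ * B1⁻¹ * B21⁻¹, B21,
      B0 * (B3 ^ 2)⁻¹ * B13⁻¹ * B2⁻¹ * B32⁻¹, B32,
      B0 * (B1 ^ 2)⁻¹ * B21⁻¹ * B3⁻¹ * B13⁻¹, B13) :
      Kˣ × Kˣ × Kˣ × Kˣ × Kˣ × Kˣ) ∈ Hset K := by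
    simp only [Hset, Set.mem_setOf_eq]
    exact ⟨mul_mem (mul_mem (mul_mem (mul_mem hB0F (inv_mem (pow_mem hB2F 2)))
        (inv_mem hB32F)) (inv_mem hB1F)) (inv_mem hB21F), hB21F,
      mul_mem (mul_mem (mul_mem (mul_mem hB0F (inv_mem (pow_mem hB3F 2)))
        (inv_mem hB13F)) (inv_mem hB2F)) (inv_mem hB32F), hB32F,
      mul_mem (mul_mem (mul_mem (mul_mem hB0F (inv_mem (pow_mem hB1F 2)))
        (inv_mem hB21F)) (inv_mem hB3F)) (inv_mem hB13F), hB13F,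
      B0 * (B1 * B2 * B3)⁻¹, mul_mem hB0F (inv_mem (mul_mem (mul_mem hB1F hB2F) hB3F)),
      keyCube B0 B1 B2 B3 B21 B32 B13⟩
  have honeH : ((1, 1, 1, 1, 1, 1) : Kˣ × Kˣ × Kˣ × Kˣ × Kˣ × Kˣ) ∈ Hset K := by
    simp only [Hset, Set.mem_setOf_eq]
    exact ⟨one_mem _, one_mem _, one_mem _, one_mem _, one_mem _, one_mem _,
      1, one_mem _, by simp⟩
  have h2u : ((w12, w21, w23, w32, w31, w13) : Kˣ × Kˣ × Kˣ × Kˣ × Kˣ × Kˣ) =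
      (c12, c21, c23, c32, c31, c13) := by
    refine ((hR₂ (c12, c21, c23, c32, c31, c13)).unique
      ⟨hw2R, _, hαH, ?_⟩ ⟨hz2R, (1, 1, 1, 1, 1, 1), honeH, by simp⟩)
    simp only [Prod.mk_mul_mk, Prod.mk.injEq]
    exact ⟨hw12, hw21, hw23, hw32, hw31, hw13⟩
  simp only [Prod.mk.injEq] at h2u
  obtain ⟨g12, g21, g23, g32, g31, g13⟩ := h2u
  have hB21one : B21 = 1 := mul_eq_right.mp (by rw [← hw21, g21])
  have hB32one : B32 = 1 := mul_eq_right.mp (by rw [← hw32, g32])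
  have hB13one : B13 = 1 := mul_eq_right.mp (by rw [← hw13, g13])
  have hα12 : B0 * (B2 ^ 2)⁻¹ * B32⁻¹ * B1⁻¹ * B21⁻¹ = 1 :=
    mul_eq_right.mp (by rw [← hw12, g12])
  have hα23 : B0 * (B3 ^ 2)⁻¹ * B13⁻¹ * B2⁻¹ * B32⁻¹ = 1 :=
    mul_eq_right.mp (by rw [← hw23, g23])
  have hα31 : B0 * (B1 ^ 2)⁻¹ * B21⁻¹ * B3⁻¹ * B13⁻¹ = 1 :=
    mul_eq_right.mp (by rw [← hw31, g31])
  rw [hB32one, hB21one] at hα12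
  rw [hB13one, hB32one] at hα23
  rw [hB21one, hB13one] at hα31
  have eq1 : B0 = B1 * B2 ^ 2 := keySolve B0 B2 B1 hα12
  have eq2 : B0 = B2 * B3 ^ 2 := keySolve B0 B3 B2 hα23
  have eq3 : B0 = B3 * B1 ^ 2 := keySolve B0 B1 B3 hα31
  have k1 : (B1 : K) * (B2 : K) ^ 2 = (B2 : K) * (B3 : K) ^ 2 := by
    exact_mod_cast congrArg Units.val (eq1.symm.trans eq2)
  have k2 : (B2 : K) * (B3 : K) ^ 2 = (B3 : K) * (B1 : K) ^ 2 := by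
    exact_mod_cast congrArg Units.val (eq2.symm.trans eq3)
  have k3 : (B1 : K) ^ 3 = (B3 : K) ^ 3 := by
    have hne : ((B2 : K) ^ 2 * (B3 : K)) ≠ 0 :=
      mul_ne_zero (pow_ne_zero 2 (Units.ne_zero B2)) (Units.ne_zero B3)
    apply mul_left_cancel₀ hne
    linear_combination ((B1 : K) ^ 2 * (B3 : K)) * k1 + (- ((B2 : K) * (B3 : K) ^ 2)) * k2
  have hB1B3 : B1 = B3 := by
    have hcube : (B1 * B3⁻¹) ^ 3 = 1 := by
      rw [Units.ext_iff]; push_cast; field_simp; exact k3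
    exact mul_inv_eq_one.mp (unitsF_tf K (mul_mem hB1F (inv_mem hB3F)) hcube)
  have hB2B3 : B2 = B3 := by
    have : B2 * B3 ^ 2 = B3 * B3 ^ 2 := by rw [← eq2, eq3, hB1B3]
    exact mul_right_cancel this
  have h1u : ((w1, w2, w3) : Kˣ × Kˣ × Kˣ) = (e1, e2, e3) := by
    refine (hR₁ (e1, e2, e3)).unique ⟨hw1R, B3, hB3F, ?_⟩ ⟨hz1R, 1, one_mem _, by simp⟩
    simp only [Prod.mk.injEq]
    exact ⟨by rw [hw1e, hB1B3], by rw [hw2e, hB2B3], hw3e⟩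
  simp only [Prod.mk.injEq] at h1u ⊢
  exact ⟨h1u, g12, g21, g23, g32, g31, g13⟩
end

section
/- Let R ⊆ K^× be a system of representatives for K^× / F, and let R_F ⊆ F be a system of representatives for F / {ξ^3 : ξ ∈ F}. Then R_2 := ⋃_{ρ ∈ R_F} (ρR × R × R × R × R × R) is a system of representatives for the quotient group (K^×)^6 / H (with coordinates ordered as (y_{12}, y_{21}, y_{23}, y_{32}, y_{31}, y_{13})). -/
open NumberField

/-- Lemma 2.5: if `R` is a system of representatives for `K^×/F` and
`R_F ⊆ F` is a system of representatives for `F` modulo cubes, then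
`R₂ := ⋃_{ρ ∈ R_F} (ρR × R × R × R × R × R)` is a system of representatives for
`(K^×)⁶/H`, the coordinates being ordered as `(y₁₂, y₂₁, y₂₃, y₃₂, y₃₁, y₁₃)`. -/
theorem stmt6 (K : Type) [Field K] [NumberField K]
    (R RF : Set Kˣ)
    (hR : ∀ y : Kˣ, ∃! z, z ∈ R ∧ ∃ ζ ∈ unitsF K, z = ζ * y)
    (hRFsub : RF ⊆ (unitsF K : Set Kˣ))
    (hRF : ∀ y ∈ unitsF K, ∃! z, z ∈ RF ∧ ∃ ξ ∈ unitsF K, z = ξ ^ 3 * y) :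
    ∀ y : Kˣ × Kˣ × Kˣ × Kˣ × Kˣ × Kˣ,
      ∃! z : Kˣ × Kˣ × Kˣ × Kˣ × Kˣ × Kˣ,
        ((∃ ρ ∈ RF, ∃ x ∈ R, z.1 = ρ * x) ∧ z.2.1 ∈ R ∧ z.2.2.1 ∈ R ∧
          z.2.2.2.1 ∈ R ∧ z.2.2.2.2.1 ∈ R ∧ z.2.2.2.2.2 ∈ R) ∧
        ∃ h ∈ Hset K, z = h * y := by
  intro y
  obtain ⟨y1, y2, y3, y4, y5, y6⟩ := y
  obtain ⟨x1, ⟨hx1R, ζ1, hζ1, hx1⟩, hx1u⟩ := hR y1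
  obtain ⟨x2, ⟨hx2R, ζ2, hζ2, hx2⟩, hx2u⟩ := hR y2
  obtain ⟨x3, ⟨hx3R, ζ3, hζ3, hx3⟩, hx3u⟩ := hR y3
  obtain ⟨x4, ⟨hx4R, ζ4, hζ4, hx4⟩, hx4u⟩ := hR y4
  obtain ⟨x5, ⟨hx5R, ζ5, hζ5, hx5⟩, hx5u⟩ := hR y5
  obtain ⟨x6, ⟨hx6R, ζ6, hζ6, hx6⟩, hx6u⟩ := hR y6
  set w : Kˣ := (ζ1 * ζ2 ^ 2 * ζ3 * ζ4 ^ 2 * ζ5 * ζ6 ^ 2)⁻¹ with hw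
  have hwF : w ∈ unitsF K := by
    apply Subgroup.inv_mem
    exact mul_mem (mul_mem (mul_mem (mul_mem (mul_mem hζ1 (pow_mem hζ2 2)) hζ3)
      (pow_mem hζ4 2)) hζ5) (pow_mem hζ6 2)
  obtain ⟨ρ, ⟨hρRF, ξ, hξ, hρ⟩, hρu⟩ := hRF w hwF
  have hρF : ρ ∈ unitsF K := hRFsub hρRF
  refine ⟨(ρ * x1, x2, x3, x4, x5, x6),
    ⟨⟨⟨ρ, hρRF, x1, hx1R, rfl⟩, hx2R, hx3R, hx4R, hx5R, hx6R⟩, ?_⟩, ?_⟩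
  · refine ⟨(ρ * ζ1, ζ2, ζ3, ζ4, ζ5, ζ6),
      ⟨mul_mem hρF hζ1, hζ2, hζ3, hζ4, hζ5, hζ6, ξ, hξ, ?_⟩, ?_⟩
    · show ρ * ζ1 * ζ2 ^ 2 * ζ3 * ζ4 ^ 2 * ζ5 * ζ6 ^ 2 = ξ ^ 3
      rw [hρ, hw]
      group
    · show ((ρ * x1, x2, x3, x4, x5, x6) : Kˣ × Kˣ × Kˣ × Kˣ × Kˣ × Kˣ)
        = (ρ * ζ1 * y1, ζ2 * y2, ζ3 * y3, ζ4 * y4, ζ5 * y5, ζ6 * y6)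
      rw [hx1, hx2, hx3, hx4, hx5, hx6, mul_assoc]
  · rintro ⟨z1, z2, z3, z4, z5, z6⟩
      ⟨⟨⟨ρ', hρ'RF, x', hx'R, hz1⟩, hz2R, hz3R, hz4R, hz5R, hz6R⟩,
       ⟨h1, h2, h3, h4, h5, h6⟩, ⟨hh1, hh2, hh3, hh4, hh5, hh6, ξ', hξ', hprod⟩, hzy⟩
    simp only [Prod.mk.injEq, Prod.mk_mul_mk] at hzy hprod ⊢
    obtain ⟨e1, e2, e3, e4, e5, e6⟩ := hzy
    have hρ'F : ρ' ∈ unitsF K := hRFsub hρ'RF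
    -- coordinates 2..6
    have hz2' : z2 = x2 := hx2u z2 ⟨hz2R, h2, hh2, e2⟩
    have hz3' : z3 = x3 := hx3u z3 ⟨hz3R, h3, hh3, e3⟩
    have hz4' : z4 = x4 := hx4u z4 ⟨hz4R, h4, hh4, e4⟩
    have hz5' : z5 = x5 := hx5u z5 ⟨hz5R, h5, hh5, e5⟩
    have hz6' : z6 = x6 := hx6u z6 ⟨hz6R, h6, hh6, e6⟩
    have hh2' : h2 = ζ2 := mul_right_cancel (show h2 * y2 = ζ2 * y2 by rw [← e2, hz2', hx2])
    have hh3' : h3 = ζ3 := mul_right_cancel (show h3 * y3 = ζ3 * y3 by rw [← e3, hz3', hx3])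
    have hh4' : h4 = ζ4 := mul_right_cancel (show h4 * y4 = ζ4 * y4 by rw [← e4, hz4', hx4])
    have hh5' : h5 = ζ5 := mul_right_cancel (show h5 * y5 = ζ5 * y5 by rw [← e5, hz5', hx5])
    have hh6' : h6 = ζ6 := mul_right_cancel (show h6 * y6 = ζ6 * y6 by rw [← e6, hz6', hx6])
    -- coordinate 1
    have hx' : x' = (ρ'⁻¹ * h1) * y1 := by
      have : ρ' * x' = h1 * y1 := by rw [← hz1, e1]
      rw [mul_assoc, ← this]
      group
    have hx'1 : x' = x1 := hx1u x' ⟨hx'R, ρ'⁻¹ * h1, mul_mem (inv_mem hρ'F) hh1, hx'⟩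
    have hh1' : h1 = ρ' * ζ1 := by
      have heq : (ρ'⁻¹ * h1) * y1 = ζ1 * y1 := by rw [← hx', hx'1, hx1]
      have hcan : ρ'⁻¹ * h1 = ζ1 := mul_right_cancel heq
      rw [← hcan]; group
    have hρ'w : ρ' = ξ' ^ 3 * w := by
      rw [hw]
      rw [hh1', hh2', hh3', hh4', hh5', hh6'] at hprod
      have : ρ' * (ζ1 * ζ2 ^ 2 * ζ3 * ζ4 ^ 2 * ζ5 * ζ6 ^ 2) = ξ' ^ 3 := by
        rw [← hprod]; group
      rw [← this]
      group
    have hρ' : ρ' = ρ := hρu ρ' ⟨hρ'RF, ξ', hξ', hρ'w⟩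
    have hz1' : z1 = ρ' * x' := hz1
    exact ⟨by rw [hz1', hρ', hx'1], hz2', hz3', hz4', hz5', hz6'⟩
end

section
/- Let D, B ⊆ R^n be bounded subsets with B ∈ Lip(n, M, L), and let Λ ⊆ R^n be a lattice (a discrete subgroup of rank n). Then #{λ ∈ Λ : (λ + D) ∩ B ≠ ∅} ≤ C(Λ, D, n) · M (L+1)^{n−1}, where C(Λ, D, n) depends only on Λ, D and n. -/
open Set

/-- The unit cube `[0,1]^m` in `R^m` (with the Euclidean norm). -/
def unitCube (m : ℕ) : Set (EuclideanSpace ℝ (Fin m)) := {v | ∀ i, v i ∈ Set.Icc (0 : ℝ) 1}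

/-- `B ∈ Lip(n, M, L)`: `B ⊆ R^n` is covered by the images of `M` maps
`Φ : [0,1]^{n-1} → R^n`, each satisfying the Lipschitz condition `|Φ(v) - Φ(w)| ≤ L|v - w|`
with respect to the Euclidean norms. (For `n = 1`, `[0,1]⁰` is a single point, so these
are the sets with at most `M` elements.) -/
def InLip (n M : ℕ) (L : ℝ) (B : Set (EuclideanSpace ℝ (Fin n))) : Prop :=
  ∃ Φ : Fin M → (EuclideanSpace ℝ (Fin (n - 1)) → EuclideanSpace ℝ (Fin n)),
    (∀ i, ∀ v ∈ unitCube (n - 1), ∀ w ∈ unitCube (n - 1),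
      ‖Φ i v - Φ i w‖ ≤ L * ‖v - w‖) ∧
    B ⊆ ⋃ i, Φ i '' unitCube (n - 1)

set_option maxHeartbeats 1000000 in
/-- Lemma 4.1 (i): for a lattice `Λ ⊆ R^n` and bounded sets
`D`, `B ⊆ R^n` with `B ∈ Lip(n, M, L)`,
`#{λ ∈ Λ : (λ + D) ∩ B ≠ ∅} ≤ C(Λ, D, n) · M (L+1)^{n-1}`. -/
theorem stmt9 (n : ℕ) (hn : 0 < n)
    (Λ : Submodule ℤ (EuclideanSpace ℝ (Fin n))) [DiscreteTopology Λ] [IsZLattice ℝ Λ]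
    (D : Set (EuclideanSpace ℝ (Fin n))) (hD : Bornology.IsBounded D) :
    ∃ C : ℝ, ∀ M : ℕ, 0 < M → ∀ L : ℝ, 0 < L →
      ∀ B : Set (EuclideanSpace ℝ (Fin n)), Bornology.IsBounded B → InLip n M L B →
        (Nat.card {x : EuclideanSpace ℝ (Fin n) //
            x ∈ Λ ∧ (((x + ·) '' D) ∩ B).Nonempty} : ℝ) ≤
          C * M * (L + 1) ^ (n - 1) := by
  classical
  obtain ⟨r₀, hr₀⟩ := hD.subset_closedBall 0
  set RD : ℝ := max r₀ 0 with hRDdef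
  have hDsub : D ⊆ Metric.closedBall 0 RD :=
    hr₀.trans (Metric.closedBall_subset_closedBall (le_max_left _ _))
  set R : ℝ := Real.sqrt n + RD with hRdef
  have hR0 : (0:ℝ) ≤ R := add_nonneg (Real.sqrt_nonneg _) (le_max_right _ _)
  set T : Set (EuclideanSpace ℝ (Fin n)) := {x | x ∈ Λ ∧ ‖x‖ ≤ 2 * R} with hTdef
  have hT : T.Finite := by
    haveI : DiscreteTopology Λ.toAddSubgroup := ‹DiscreteTopology Λ›
    have hc : IsClosed (Λ : Set (EuclideanSpace ℝ (Fin n))) :=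
      AddSubgroup.isClosed_of_discrete (H := Λ.toAddSubgroup)
    haveI : DiscreteTopology ((Λ : Set (EuclideanSpace ℝ (Fin n))) : Set _) :=
      ‹DiscreteTopology Λ›
    have h := Metric.finite_isBounded_inter_isClosed
      (K := Metric.closedBall (0 : EuclideanSpace ℝ (Fin n)) (2*R))
      (s := (Λ : Set _)) DiscreteTopology.isDiscrete Metric.isBounded_closedBall hc
    refine h.subset ?_
    rintro x ⟨h1, h2⟩
    exact ⟨by simpa [dist_zero_right] using h2, h1⟩
  haveI hTfin : Finite ↥T := hT.to_subtype
  refine ⟨(T.ncard : ℝ), ?_⟩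
  intro M hM L hL B hB hLip
  obtain ⟨Φ, hΦlip, hΦcov⟩ := hLip
  set k : ℕ := ⌈L⌉₊ with hkdef
  have hk0 : 0 < k := Nat.ceil_pos.2 hL
  have hk0R : (0:ℝ) < k := by exact_mod_cast hk0
  have hkL : L ≤ (k : ℝ) := Nat.le_ceil L
  have hkL1 : (k : ℝ) ≤ L + 1 := (Nat.ceil_lt_add_one hL.le).le
  -- grid points in the cube
  set pt : (Fin (n-1) → Fin k) → EuclideanSpace ℝ (Fin (n-1)) :=
    fun g => WithLp.toLp 2 (fun j => (g j : ℝ) / k) with hptdef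
  have hptcube : ∀ g, pt g ∈ unitCube (n-1) := by
    intro g j
    show ((g j : ℕ) : ℝ) / k ∈ Set.Icc (0:ℝ) 1
    refine ⟨by positivity, ?_⟩
    rw [div_le_one hk0R]
    exact_mod_cast (g j).2.le
  -- every cube point is near a grid point
  have hnear : ∀ v ∈ unitCube (n-1), ∃ g, ‖v - pt g‖ ≤ Real.sqrt n / k := by
    intro v hv
    have hgdef : ∀ j : Fin (n-1), min ⌊v j * k⌋₊ (k-1) < k :=
      fun j => lt_of_le_of_lt (min_le_right _ _) (Nat.sub_lt hk0 one_pos)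
    set g : Fin (n-1) → Fin k := fun j => ⟨min ⌊v j * k⌋₊ (k-1), hgdef j⟩ with hg
    refine ⟨g, ?_⟩
    have hcomp : ∀ j, |v j - pt g j| ≤ 1 / k := by
      intro j
      obtain ⟨h0, h1⟩ := hv j
      have hvk0 : 0 ≤ v j * k := by positivity
      have hbound : ((g j : ℕ) : ℝ) ≤ v j * k ∧ v j * k ≤ ((g j : ℕ) : ℝ) + 1 := by
        rcases le_or_gt ⌊v j * k⌋₊ (k-1) with hc | hc
        · have he : (g j : ℕ) = ⌊v j * k⌋₊ := min_eq_left hc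
          rw [he]
          exact ⟨Nat.floor_le hvk0, (Nat.lt_floor_add_one _).le⟩
        · have he : (g j : ℕ) = k - 1 := min_eq_right hc.le
          have hk1 : k ≤ ⌊v j * k⌋₊ := by omega
          have hge : (k : ℝ) ≤ v j * k := by
            exact_mod_cast (Nat.le_floor_iff hvk0).1 hk1
          have hle : v j * k ≤ (k : ℝ) := by nlinarith
          have hcast : ((g j : ℕ) : ℝ) = (k : ℝ) - 1 := by
            rw [he, Nat.cast_sub hk0]; simp
          rw [hcast]
          constructor <;> nlinarith
      have heq : pt g j = ((g j : ℕ) : ℝ) / k := rfl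
      rw [heq, abs_le]
      constructor
      · rw [neg_le, neg_sub]
        rw [div_sub' (ne_of_gt hk0R), div_le_div_iff₀ hk0R hk0R]
        nlinarith [hbound.1]
      · rw [sub_div' (ne_of_gt hk0R)] at *
        rw [div_le_div_iff₀ hk0R hk0R]
        nlinarith [hbound.2]
    have hnorm : ‖v - pt g‖ ≤ Real.sqrt ((n:ℝ) * (1/k)^2) := by
      rw [EuclideanSpace.norm_eq]
      apply Real.sqrt_le_sqrt
      have : ∀ j, ‖(v - pt g) j‖ ^ 2 ≤ (1/k)^2 := by
        intro j
        have : (v - pt g) j = v j - pt g j := rfl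
        rw [this, Real.norm_eq_abs, sq_abs]
        have h := hcomp j
        have h1k : (0:ℝ) ≤ 1/k := by positivity
        nlinarith [abs_nonneg (v j - pt g j), sq_abs (v j - pt g j),
          abs_le.1 h]
      calc ∑ j, ‖(v - pt g) j‖ ^ 2 ≤ ∑ _j : Fin (n-1), (1/(k:ℝ))^2 :=
            Finset.sum_le_sum (fun j _ => this j)
        _ = (n-1 : ℕ) * (1/(k:ℝ))^2 := by
            rw [Finset.sum_const, Finset.card_univ, Fintype.card_fin, nsmul_eq_mul]
        _ ≤ (n:ℝ) * (1/k)^2 := by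
            have : ((n-1 : ℕ) : ℝ) ≤ (n : ℝ) := by exact_mod_cast Nat.sub_le n 1
            nlinarith [sq_nonneg (1/(k:ℝ))]
    calc ‖v - pt g‖ ≤ Real.sqrt ((n:ℝ) * (1/k)^2) := hnorm
      _ = Real.sqrt n * (1/k) := by
          rw [Real.sqrt_mul (Nat.cast_nonneg n), Real.sqrt_sq (by positivity : (0:ℝ) ≤ 1/(k:ℝ))]
      _ = Real.sqrt n / k := by ring
  -- centers
  set c : (Fin M × (Fin (n-1) → Fin k)) → EuclideanSpace ℝ (Fin n) :=
    fun p => Φ p.1 (pt p.2) with hcdef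
  have hcov : ∀ b ∈ B, ∃ p, ‖b - c p‖ ≤ Real.sqrt n := by
    intro b hb
    obtain ⟨i, v, hv, hfv⟩ : ∃ i v, v ∈ unitCube (n-1) ∧ Φ i v = b := by
      have h := hΦcov hb
      simp only [Set.mem_iUnion, Set.mem_image] at h
      obtain ⟨i, v, hv, he⟩ := h
      exact ⟨i, v, hv, he⟩
    obtain ⟨g, hg⟩ := hnear v hv
    refine ⟨(i, g), ?_⟩
    have h1 : ‖Φ i v - Φ i (pt g)‖ ≤ L * ‖v - pt g‖ := hΦlip i v hv (pt g) (hptcube g)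
    have h2 : L * ‖v - pt g‖ ≤ L * (Real.sqrt n / k) :=
      mul_le_mul_of_nonneg_left hg hL.le
    have h3 : L * (Real.sqrt n / k) ≤ Real.sqrt n := by
      have hLk : L / k ≤ 1 := (div_le_one hk0R).2 hkL
      have hs : (0:ℝ) ≤ Real.sqrt n := Real.sqrt_nonneg _
      calc L * (Real.sqrt n / k) = Real.sqrt n * (L/k) := by ring
        _ ≤ Real.sqrt n * 1 := by nlinarith
        _ = Real.sqrt n := mul_one _
    rw [← hfv]
    calc ‖Φ i v - c (i,g)‖ = ‖Φ i v - Φ i (pt g)‖ := rfl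
      _ ≤ L * ‖v - pt g‖ := h1
      _ ≤ Real.sqrt n := h2.trans h3
  -- sets of nearby lattice points
  set S' : (Fin M × (Fin (n-1) → Fin k)) → Set (EuclideanSpace ℝ (Fin n)) :=
    fun p => {x | x ∈ Λ ∧ ‖x - c p‖ ≤ R} with hS'def
  have hScov : ∀ x : EuclideanSpace ℝ (Fin n), x ∈ Λ →
      (((x + ·) '' D) ∩ B).Nonempty → ∃ p, x ∈ S' p := by
    rintro x hxΛ ⟨b, ⟨d, hd, rfl⟩, hbB⟩
    obtain ⟨p, hp⟩ := hcov _ hbB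
    refine ⟨p, hxΛ, ?_⟩
    have hdnorm : ‖d‖ ≤ RD := by
      have := hDsub hd
      simpa [dist_zero_right] using this
    have heq : x - c p = (x + d - c p) - d := by abel
    rw [heq]
    calc ‖(x + d - c p) - d‖ ≤ ‖x + d - c p‖ + ‖d‖ := norm_sub_le _ _
      _ ≤ Real.sqrt n + RD := add_le_add hp hdnorm
      _ = R := rfl
  -- representatives and injection
  set x₀ : (Fin M × (Fin (n-1) → Fin k)) → EuclideanSpace ℝ (Fin n) :=
    fun p => if h : (S' p).Nonempty then h.choose else 0 with hx₀def
  have hx₀mem : ∀ p, (S' p).Nonempty → x₀ p ∈ S' p := by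
    intro p h
    rw [hx₀def]
    simp only [dif_pos h]
    exact h.choose_spec
  have hsub : ∀ (x : EuclideanSpace ℝ (Fin n)), ∀ p, x ∈ S' p → x - x₀ p ∈ T := by
    intro x p hx
    have h0 := hx₀mem p ⟨x, hx⟩
    refine ⟨Submodule.sub_mem _ hx.1 h0.1, ?_⟩
    have heq : x - x₀ p = (x - c p) - (x₀ p - c p) := by abel
    rw [heq]
    calc ‖(x - c p) - (x₀ p - c p)‖ ≤ ‖x - c p‖ + ‖x₀ p - c p‖ := norm_sub_le _ _
      _ ≤ R + R := add_le_add hx.2 h0.2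
      _ = 2 * R := by ring
  set f : {x : EuclideanSpace ℝ (Fin n) // x ∈ Λ ∧ (((x + ·) '' D) ∩ B).Nonempty} →
      (Fin M × (Fin (n-1) → Fin k)) × ↥T := fun x =>
    ⟨(hScov x x.2.1 x.2.2).choose,
     ⟨(x : EuclideanSpace ℝ (Fin n)) - x₀ (hScov x x.2.1 x.2.2).choose,
      hsub x _ (hScov x x.2.1 x.2.2).choose_spec⟩⟩ with hfdef
  have hfinj : Function.Injective f := by
    intro a b hab
    have h1 : (f a).1 = (f b).1 := by rw [hab]
    have h2 : ((f a).2 : EuclideanSpace ℝ (Fin n)) = ((f b).2 : EuclideanSpace ℝ (Fin n)) := by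
      rw [hab]
    simp only [hfdef] at h1 h2
    rw [h1] at h2
    exact Subtype.ext (by exact sub_left_injective h2)
  have key : Nat.card {x : EuclideanSpace ℝ (Fin n) //
      x ∈ Λ ∧ (((x + ·) '' D) ∩ B).Nonempty} ≤ (M * k^(n-1)) * T.ncard := by
    calc Nat.card {x : EuclideanSpace ℝ (Fin n) //
        x ∈ Λ ∧ (((x + ·) '' D) ∩ B).Nonempty}
        ≤ Nat.card ((Fin M × (Fin (n-1) → Fin k)) × ↥T) :=
          Nat.card_le_card_of_injective f hfinj
      _ = Nat.card (Fin M × (Fin (n-1) → Fin k)) * Nat.card ↥T := Nat.card_prod _ _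
      _ = (M * k^(n-1)) * T.ncard := by
          rw [Nat.card_coe_set_eq]
          congr 1
          simp [Nat.card_eq_fintype_card]
  have hpow : ((k:ℝ))^(n-1) ≤ (L+1)^(n-1) := pow_le_pow_left₀ (by positivity) hkL1 _
  have hT0 : (0:ℝ) ≤ (T.ncard : ℝ) := Nat.cast_nonneg _
  calc (Nat.card {x : EuclideanSpace ℝ (Fin n) //
        x ∈ Λ ∧ (((x + ·) '' D) ∩ B).Nonempty} : ℝ)
      ≤ ((M * k^(n-1)) * T.ncard : ℕ) := by exact_mod_cast key
    _ = (M:ℝ) * (k:ℝ)^(n-1) * (T.ncard : ℝ) := by push_cast; ring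
    _ ≤ (M:ℝ) * (L+1)^(n-1) * (T.ncard : ℝ) :=
        mul_le_mul_of_nonneg_right
          (mul_le_mul_of_nonneg_left hpow (Nat.cast_nonneg _)) hT0
    _ = (T.ncard : ℝ) * M * (L+1)^(n-1) := by ring
end

section
/- Let D, B ⊆ R^n be compact subsets with B ∈ Lip(n, M, L). Then the set {x ∈ R^n : (x + D) ∩ B ≠ ∅} is Lebesgue measurable and Vol{x ∈ R^n : (x + D) ∩ B ≠ ∅} ≤ C(D, n) · M (L+1)^{n−1}, where C(D, n) depends only on D and n. -/
open Set MeasureTheory Metric ENNReal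

lemma coord_bound (N : ℕ) (hN : 1 ≤ N) (t : ℝ) (ht : t ∈ Set.Icc (0:ℝ) 1) :
    |t - (min ⌊t * N⌋₊ (N-1) : ℕ) / N| ≤ 1 / N := by
  have hN0 : (0:ℝ) < N := by exact_mod_cast hN
  have h1N : (0:ℝ) ≤ 1 / N := by positivity
  obtain ⟨ht0, ht1⟩ := ht
  by_cases h : ⌊t * N⌋₊ ≤ N - 1
  · rw [min_eq_left h]
    have h1 : (⌊t * N⌋₊ : ℝ) ≤ t * N := Nat.floor_le (by positivity)
    have h2 : t * N < ⌊t * N⌋₊ + 1 := Nat.lt_floor_add_one _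
    have hk : (⌊t * N⌋₊ : ℝ) / N ≤ t := by rw [div_le_iff₀ hN0]; exact h1
    have hk2 : t ≤ ((⌊t * N⌋₊ : ℝ) + 1) / N := by rw [le_div_iff₀ hN0]; linarith
    have hsplit : ((⌊t * N⌋₊ : ℝ) + 1) / N = (⌊t * N⌋₊ : ℝ) / N + 1 / N := add_div _ _ _
    rw [abs_le]
    constructor <;> linarith [hsplit ▸ hk2]
  · push_neg at h
    have h' : N ≤ ⌊t * N⌋₊ := by omega
    have h1 : (N : ℝ) ≤ t * N := by
      have := (Nat.le_floor_iff (α := ℝ) (by positivity : (0:ℝ) ≤ t * N)).mp h'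
      exact_mod_cast this
    have ht1' : 1 ≤ t := by nlinarith
    have heq : t = 1 := le_antisymm ht1 ht1'
    rw [min_eq_right (by omega), heq]
    have hcast : ((N - 1 : ℕ) : ℝ) = (N : ℝ) - 1 := by
      push_cast [Nat.cast_sub hN]; ring
    rw [hcast]
    have hval : 1 - ((N:ℝ) - 1) / N = 1 / N := by field_simp; ring
    rw [hval, abs_of_nonneg h1N]

/-- Lemma 4.1 (ii). -/
theorem stmt10 (n : ℕ) (hn : 0 < n)
    (D : Set (EuclideanSpace ℝ (Fin n))) (hD : IsCompact D) :
    ∃ C : ℝ, ∀ M : ℕ, 0 < M → ∀ L : ℝ, 0 < L →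
      ∀ B : Set (EuclideanSpace ℝ (Fin n)), IsCompact B → InLip n M L B →
        MeasurableSet {x : EuclideanSpace ℝ (Fin n) | (((x + ·) '' D) ∩ B).Nonempty} ∧
        (volume {x : EuclideanSpace ℝ (Fin n) | (((x + ·) '' D) ∩ B).Nonempty}).toReal ≤
          C * M * (L + 1) ^ (n - 1) := by
  classical
  obtain ⟨R, hR0, hDR⟩ := hD.isBounded.subset_closedBall_lt 0 0
  set r : ℝ := Real.sqrt n + R with hr
  set V : ℝ≥0∞ := volume (closedBall (0:EuclideanSpace ℝ (Fin n)) r) with hV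
  have hVfin : V ≠ ⊤ := (measure_closedBall_lt_top).ne
  refine ⟨V.toReal, ?_⟩
  intro M hM L hL B hB hBL
  set m : ℕ := n - 1 with hm
  obtain ⟨Φ, hLip, hcov⟩ := hBL
  -- the set equals the Minkowski difference
  set S : Set (EuclideanSpace ℝ (Fin n)) := (fun p : EuclideanSpace ℝ (Fin n) × EuclideanSpace ℝ (Fin n) => p.1 - p.2) '' (B ×ˢ D) with hS
  have hSeq : {x : EuclideanSpace ℝ (Fin n) | (((x + ·) '' D) ∩ B).Nonempty} = S := by
    ext x
    simp only [hS, Set.mem_setOf_eq, Set.Nonempty, Set.mem_inter_iff, Set.mem_image,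
      Set.mem_prod, Prod.exists]
    constructor
    · rintro ⟨y, ⟨d, hd, rfl⟩, hyB⟩
      exact ⟨x + d, d, ⟨hyB, hd⟩, by abel⟩
    · rintro ⟨b, d, ⟨hb, hd⟩, rfl⟩
      exact ⟨b, ⟨d, hd, by abel⟩, hb⟩
  have hSc : IsCompact S := (hB.prod hD).image (continuous_fst.sub continuous_snd)
  refine ⟨hSeq ▸ hSc.measurableSet, ?_⟩
  rw [hSeq]
  -- discretization
  set N : ℕ := ⌈L⌉₊ with hNdef
  have hN1 : 1 ≤ N := Nat.one_le_ceil_iff.mpr hL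
  have hLN : L ≤ N := Nat.le_ceil L
  have hN0 : (0:ℝ) < N := by exact_mod_cast hN1
  set c : (Fin m → Fin N) → EuclideanSpace ℝ (Fin m) :=
    fun k => WithLp.toLp 2 (fun j => ((k j : ℕ) : ℝ) / N) with hc
  have hcmem : ∀ k, c k ∈ unitCube m := by
    intro k j
    show ((k j : ℕ) : ℝ) / N ∈ Set.Icc (0:ℝ) 1
    constructor
    · positivity
    · rw [div_le_one hN0]
      exact_mod_cast (k j).isLt.le
  have key : S ⊆ ⋃ (i : Fin M) (k : Fin m → Fin N), closedBall (Φ i (c k)) r := by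
    rintro x ⟨⟨b, d⟩, ⟨hbB, hdD⟩, rfl⟩
    obtain ⟨i, hi⟩ := Set.mem_iUnion.mp (hcov hbB)
    obtain ⟨v, hv, hΦv0⟩ := hi
    have hΦv : Φ i v = b := hΦv0
    set k : Fin m → Fin N := fun j => ⟨min ⌊v j * N⌋₊ (N-1), by omega⟩ with hk
    refine Set.mem_iUnion.mpr ⟨i, Set.mem_iUnion.mpr ⟨k, ?_⟩⟩
    rw [mem_closedBall, dist_eq_norm]
    have hd : ‖d‖ ≤ R := by
      have := hDR hdD
      rwa [mem_closedBall_zero_iff] at this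
    have hbd : ‖b - Φ i (c k)‖ ≤ Real.sqrt n := by
      rw [← hΦv]
      have hvck : ‖v - c k‖ ≤ Real.sqrt m / N := by
        have hnorm : ‖v - c k‖ = Real.sqrt (∑ j, ‖(v - c k) j‖ ^ 2) :=
          EuclideanSpace.norm_eq _
        rw [hnorm]
        have hbound : ∑ j, ‖(v - c k) j‖ ^ 2 ≤ (m : ℝ) * (1 / N) ^ 2 := by
          calc ∑ j, ‖(v - c k) j‖ ^ 2 ≤ ∑ _j : Fin m, (1 / N : ℝ) ^ 2 := by
                apply Finset.sum_le_sum
                intro j _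
                have hj : |v j - ((k j : ℕ) : ℝ) / N| ≤ 1 / N := coord_bound N hN1 (v j) (hv j)
                have : ‖(v - c k) j‖ = |v j - ((k j : ℕ) : ℝ) / N| := by
                  simp [hc, Real.norm_eq_abs]
                rw [this]
                have h1N : (0:ℝ) ≤ 1 / N := by positivity
                nlinarith [abs_nonneg (v j - ((k j : ℕ) : ℝ) / N)]
            _ = (m : ℝ) * (1 / N) ^ 2 := by simp [Finset.card_univ]
        calc Real.sqrt (∑ j, ‖(v - c k) j‖ ^ 2) ≤ Real.sqrt ((m : ℝ) * (1 / N) ^ 2) :=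
              Real.sqrt_le_sqrt hbound
          _ = Real.sqrt m * (1 / N) := by
              rw [Real.sqrt_mul (by positivity), Real.sqrt_sq (by positivity)]
          _ = Real.sqrt m / N := by ring
      calc ‖Φ i v - Φ i (c k)‖ ≤ L * ‖v - c k‖ := hLip i v hv (c k) (hcmem k)
        _ ≤ L * (Real.sqrt m / N) := by
            apply mul_le_mul_of_nonneg_left hvck hL.le
        _ = (L / N) * Real.sqrt m := by ring
        _ ≤ 1 * Real.sqrt m := by
            apply mul_le_mul_of_nonneg_right _ (Real.sqrt_nonneg _)
            rw [div_le_one hN0]; exact hLN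
        _ = Real.sqrt m := one_mul _
        _ ≤ Real.sqrt n := Real.sqrt_le_sqrt (by exact_mod_cast Nat.sub_le n 1)
    have habel : b - d - Φ i (c k) = (b - Φ i (c k)) + (-d) := by abel
    calc ‖b - d - Φ i (c k)‖ = ‖(b - Φ i (c k)) + (-d)‖ := by rw [habel]
      _ ≤ ‖b - Φ i (c k)‖ + ‖-d‖ := norm_add_le _ _
      _ ≤ Real.sqrt n + R := by rw [norm_neg]; exact add_le_add hbd hd
  -- volume estimate
  have hball : ∀ (x : EuclideanSpace ℝ (Fin n)), volume (closedBall x r) = V := by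
    intro x
    rw [hV, Measure.addHaar_closedBall_center]
  have hvol : volume S ≤ (M * N ^ m : ℕ) * V := by
    calc volume S ≤ volume (⋃ (i : Fin M) (k : Fin m → Fin N), closedBall (Φ i (c k)) r) :=
          measure_mono key
      _ ≤ ∑' (i : Fin M), volume (⋃ (k : Fin m → Fin N), closedBall (Φ i (c k)) r) :=
          measure_iUnion_le _
      _ ≤ ∑' (i : Fin M), ∑' (k : Fin m → Fin N), volume (closedBall (Φ i (c k)) r) := by
          apply ENNReal.tsum_le_tsum
          intro i
          exact measure_iUnion_le _
      _ = ∑' (_i : Fin M), ∑' (_k : Fin m → Fin N), V := by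
          congr 1; ext i; congr 1; ext k; exact hball _
      _ = (M * N ^ m : ℕ) * V := by
          simp [tsum_fintype, Finset.sum_const, Finset.card_univ, Fintype.card_fun]
          ring
  have htr : (volume S).toReal ≤ ((M * N ^ m : ℕ) * V).toReal := by
    exact ENNReal.toReal_mono (ENNReal.mul_ne_top (ENNReal.natCast_ne_top _) hVfin) hvol
  calc (volume S).toReal ≤ ((M * N ^ m : ℕ) * V).toReal := htr
    _ = (M : ℝ) * (N : ℝ) ^ m * V.toReal := by
        rw [ENNReal.toReal_mul, ENNReal.toReal_natCast]
        push_cast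
        ring
    _ ≤ V.toReal * M * (L + 1) ^ m := by
        have hNle : (N : ℝ) ≤ L + 1 := (Nat.ceil_lt_add_one hL.le).le
        have hpow : (N : ℝ) ^ m ≤ (L + 1) ^ m := pow_le_pow_left₀ (by positivity) hNle m
        have hVt : 0 ≤ V.toReal := ENNReal.toReal_nonneg
        have hM0 : (0:ℝ) ≤ M := Nat.cast_nonneg M
        nlinarith [mul_nonneg hVt hM0]
end

section
/- Let a be a nonzero fractional ideal of K, let σ: K → R^r × C^s be the standard (canonical) embedding, and let τ be the linear automorphism of R^r × C^s (regarded as R^d) given by τ(z_1, …, z_{r+s}) = (t_1 z_1, …, t_{r+s} z_{r+s}) with t_1, …, t_{r+s} > 0. Then (τ ∘ σ)(a) is a lattice in R^r × C^s of covolume t_1^{d_1} ⋯ t_{r+s}^{d_{r+s}} · 2^{−s} · Na · √|Δ_K|, and its first successive minimum λ with respect to the Euclidean unit ball satisfies λ ≥ (t_1^{d_1} ⋯ t_{r+s}^{d_{r+s}} · Na)^{1/d}. -/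
open NumberField NumberField.InfinitePlace MeasureTheory nonZeroDivisors
open scoped Classical

noncomputable section

variable (K : Type) [Field K] [NumberField K]

/-- The scaling automorphism `τ` of `R^r × C^s` given by
`τ(z₁, …, z_{r+s}) = (t₁z₁, …, t_{r+s}z_{r+s})`, as an additive map. -/
def scaling (t₁ : {w : InfinitePlace K // IsReal w} → ℝ)
    (t₂ : {w : InfinitePlace K // IsComplex w} → ℝ) :
    (({w : InfinitePlace K // IsReal w} → ℝ) × ({w : InfinitePlace K // IsComplex w} → ℂ)) →+
      (({w : InfinitePlace K // IsReal w} → ℝ) × ({w : InfinitePlace K // IsComplex w} → ℂ))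
    where
  toFun p := (fun w => t₁ w * p.1 w, fun w => (t₂ w : ℂ) * p.2 w)
  map_zero' := by
    refine Prod.ext ?_ ?_ <;> funext w <;> simp
  map_add' p q := by
    refine Prod.ext ?_ ?_ <;> funext w <;> simp [mul_add]

/-- The image `τ(σ(a))` of a fractional ideal `a` of `K` under the standard (mixed)
embedding `σ : K → R^r × C^s` followed by the scaling `τ`, as a `ℤ`-submodule. -/
def scaledIdealLattice (a : FractionalIdeal (RingOfIntegers K)⁰ K)
    (t₁ : {w : InfinitePlace K // IsReal w} → ℝ)
    (t₂ : {w : InfinitePlace K // IsComplex w} → ℝ) :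
    Submodule ℤ
      (({w : InfinitePlace K // IsReal w} → ℝ) × ({w : InfinitePlace K // IsComplex w} → ℂ)) :=
  Submodule.map
    (((scaling K t₁ t₂).comp (mixedEmbedding K).toAddMonoidHom).toIntLinearMap)
    ((a : Submodule (RingOfIntegers K) K).restrictScalars ℤ)

/-- The square of the Euclidean norm on `R^r × C^s` (identifying `C` with `R²`). -/
def euclNormSq
    (p : ({w : InfinitePlace K // IsReal w} → ℝ) × ({w : InfinitePlace K // IsComplex w} → ℂ)) :
    ℝ :=
  (∑ w, (p.1 w) ^ 2) + ∑ w, ‖p.2 w‖ ^ 2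

/-- scaling as a linear equiv -/
def scalingEquiv (t₁ : {w : InfinitePlace K // IsReal w} → ℝ)
    (t₂ : {w : InfinitePlace K // IsComplex w} → ℝ)
    (ht₁ : ∀ w, t₁ w ≠ 0) (ht₂ : ∀ w, t₂ w ≠ 0) :
    mixedEmbedding.mixedSpace K ≃ₗ[ℝ] mixedEmbedding.mixedSpace K where
  toFun p := (fun w => t₁ w * p.1 w, fun w => (t₂ w : ℂ) * p.2 w)
  invFun p := (fun w => (t₁ w)⁻¹ * p.1 w, fun w => ((t₂ w : ℂ))⁻¹ * p.2 w)
  map_add' p q := by refine Prod.ext ?_ ?_ <;> funext w <;> simp [mul_add]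
  map_smul' c p := by
    refine Prod.ext ?_ ?_ <;> funext w <;>
      simp [Complex.ofReal_mul, mul_comm, mul_left_comm, Complex.real_smul]
  left_inv p := by
    refine Prod.ext ?_ ?_ <;> funext w
    · simp [← mul_assoc, inv_mul_cancel₀ (ht₁ w)]
    · simp [← mul_assoc, inv_mul_cancel₀ (Complex.ofReal_ne_zero.mpr (ht₂ w))]
  right_inv p := by
    refine Prod.ext ?_ ?_ <;> funext w
    · simp [← mul_assoc, mul_inv_cancel₀ (ht₁ w)]
    · simp [← mul_assoc, mul_inv_cancel₀ (Complex.ofReal_ne_zero.mpr (ht₂ w))]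

theorem det_scalingEquiv (t₁ : {w : InfinitePlace K // IsReal w} → ℝ)
    (t₂ : {w : InfinitePlace K // IsComplex w} → ℝ)
    (ht₁ : ∀ w, t₁ w ≠ 0) (ht₂ : ∀ w, t₂ w ≠ 0) :
    LinearMap.det (scalingEquiv K t₁ t₂ ht₁ ht₂ : mixedEmbedding.mixedSpace K →ₗ[ℝ] _) =
      (∏ w, t₁ w) * ∏ w, (t₂ w) ^ 2 := by
  classical
  let b := (Pi.basisFun ℝ {w : InfinitePlace K // IsReal w}).prod
    (Pi.basis fun _ : {w : InfinitePlace K // IsComplex w} => Complex.basisOneI)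
  let c : ({w : InfinitePlace K // IsReal w} ⊕
      Σ _ : {w : InfinitePlace K // IsComplex w}, Fin 2) → ℝ :=
    Sum.elim t₁ (fun p => t₂ p.1)
  have hb : ∀ j, (scalingEquiv K t₁ t₂ ht₁ ht₂) (b j) = c j • b j := by
    rintro (w | ⟨w, k⟩)
    · refine Prod.ext ?_ ?_ <;> funext w'
      · by_cases h : w' = w <;>
          simp [b, c, scalingEquiv, Module.Basis.prod_apply, Pi.basisFun_apply, Pi.single_apply, h]
      · simp [b, c, scalingEquiv, Module.Basis.prod_apply]
    · refine Prod.ext ?_ ?_ <;> funext w'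
      · simp [b, c, scalingEquiv, Module.Basis.prod_apply]
      · by_cases h : w' = w <;>
          simp [b, c, scalingEquiv, Module.Basis.prod_apply, Pi.basis_apply, Pi.single_apply, h,
            mul_comm, Complex.real_smul]
  have hM : LinearMap.toMatrix b b
      (scalingEquiv K t₁ t₂ ht₁ ht₂ : mixedEmbedding.mixedSpace K →ₗ[ℝ] _) =
      Matrix.diagonal c := by
    ext i j
    rw [LinearMap.toMatrix_apply, LinearEquiv.coe_coe, hb j, _root_.map_smul, Module.Basis.repr_self]
    by_cases h : i = j
    · simp [h, Matrix.diagonal]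
    · simp [Matrix.diagonal, h, Finsupp.single_apply, Ne.symm h]
  rw [← LinearMap.det_toMatrix b, hM, Matrix.det_diagonal, Fintype.prod_sum_type]
  refine congrArg₂ (· * ·) rfl ?_
  rw [← Finset.univ_sigma_univ, Finset.prod_sigma]
  exact Finset.prod_congr rfl fun w _ => by simp [c, sq]

theorem prod_mult_split (f : InfinitePlace K → ℝ) :
    ∏ w, f w ^ mult w = (∏ w : {w : InfinitePlace K // IsReal w}, f w) *
      ∏ w : {w : InfinitePlace K // IsComplex w}, f w ^ 2 := by
  rw [← Fintype.prod_subtype_mul_prod_subtype (fun w : InfinitePlace K => IsReal w)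
    (fun w => f w ^ mult w)]
  refine congrArg₂ (· * ·) ?_ ?_
  · exact Finset.prod_congr rfl fun w _ => by rw [mult, if_pos w.2, pow_one]
  · rw [← (Equiv.subtypeEquivRight (fun w => not_isReal_iff_isComplex)).prod_comp
      (fun w : {w : InfinitePlace K // IsComplex w} => f w ^ 2)]
    exact Finset.prod_congr rfl fun w _ =>
      by rw [mult, if_neg w.2, Equiv.subtypeEquivRight_apply]

theorem absNorm_le_of_mem {a : FractionalIdeal (RingOfIntegers K)⁰ K} (ha : a ≠ 0)
    {x : K} (hx : x ∈ a) (hx0 : x ≠ 0) :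
    FractionalIdeal.absNorm a ≤ |Algebra.norm ℚ x| := by
  set b := a⁻¹ * FractionalIdeal.spanSingleton (RingOfIntegers K)⁰ x with hbdef
  have hxa : FractionalIdeal.spanSingleton (RingOfIntegers K)⁰ x ≤ a := by
    rwa [FractionalIdeal.spanSingleton_le_iff_mem]
  have hble : b ≤ 1 := by
    calc b ≤ a⁻¹ * a := mul_le_mul_right hxa _
    _ = 1 := inv_mul_cancel₀ ha
  have hb0 : b ≠ 0 := mul_ne_zero (inv_ne_zero ha)
    (by rwa [ne_eq, FractionalIdeal.spanSingleton_eq_zero_iff])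
  obtain ⟨I₀, hI₀⟩ := FractionalIdeal.le_one_iff_exists_coeIdeal.mp hble
  have hI₀0 : I₀ ≠ 0 := by
    rintro rfl
    rw [← hI₀] at hb0
    simp at hb0
  have h1 : (1 : ℚ) ≤ FractionalIdeal.absNorm b := by
    rw [← hI₀, FractionalIdeal.coeIdeal_absNorm]
    exact_mod_cast Nat.one_le_iff_ne_zero.mpr
      (by simpa [Ideal.absNorm_eq_zero_iff] using hI₀0)
  have hab : a * b = FractionalIdeal.spanSingleton (RingOfIntegers K)⁰ x := by
    rw [hbdef, ← mul_assoc, mul_inv_cancel₀ ha, one_mul]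
  calc FractionalIdeal.absNorm a = FractionalIdeal.absNorm a * 1 := (mul_one _).symm
    _ ≤ FractionalIdeal.absNorm a * FractionalIdeal.absNorm b :=
        mul_le_mul_of_nonneg_left h1 (FractionalIdeal.absNorm_nonneg a)
    _ = FractionalIdeal.absNorm (a * b) := (map_mul _ _ _).symm
    _ = |Algebra.norm ℚ x| := by rw [hab, FractionalIdeal.absNorm_span_singleton]

theorem euclNormSq_nonneg
    (p : ({w : InfinitePlace K // IsReal w} → ℝ) × ({w : InfinitePlace K // IsComplex w} → ℂ)) :
    0 ≤ euclNormSq K p := by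
  unfold euclNormSq; positivity

theorem sq_fst_le_euclNormSq
    (p : ({w : InfinitePlace K // IsReal w} → ℝ) × ({w : InfinitePlace K // IsComplex w} → ℂ))
    (w : {w : InfinitePlace K // IsReal w}) : (p.1 w) ^ 2 ≤ euclNormSq K p := by
  unfold euclNormSq
  refine le_trans ?_ (le_add_of_nonneg_right (by positivity))
  exact Finset.single_le_sum (f := fun w' => (p.1 w') ^ 2)
    (fun w' _ => sq_nonneg _) (Finset.mem_univ _)

theorem sq_snd_le_euclNormSq
    (p : ({w : InfinitePlace K // IsReal w} → ℝ) × ({w : InfinitePlace K // IsComplex w} → ℂ))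
    (w : {w : InfinitePlace K // IsComplex w}) : ‖p.2 w‖ ^ 2 ≤ euclNormSq K p := by
  unfold euclNormSq
  refine le_trans ?_ (le_add_of_nonneg_left (by positivity))
  exact Finset.single_le_sum (f := fun w' => ‖p.2 w'‖ ^ 2)
    (fun w' _ => sq_nonneg _) (Finset.mem_univ _)

theorem scaledIdealLattice_eq (a : FractionalIdeal (RingOfIntegers K)⁰ K) (ha : a ≠ 0)
    (t₁ : {w : InfinitePlace K // IsReal w} → ℝ)
    (t₂ : {w : InfinitePlace K // IsComplex w} → ℝ)
    (ht₁ : ∀ w, t₁ w ≠ 0) (ht₂ : ∀ w, t₂ w ≠ 0) :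
    scaledIdealLattice K a t₁ t₂ =
      ZLattice.comap ℝ (mixedEmbedding.idealLattice K (Units.mk0 a ha))
        ((scalingEquiv K t₁ t₂ ht₁ ht₂).symm : mixedEmbedding.mixedSpace K →ₗ[ℝ] _) := by
  ext x
  rw [ZLattice.comap, Submodule.mem_comap]
  rw [show ((((scalingEquiv K t₁ t₂ ht₁ ht₂).symm :
      mixedEmbedding.mixedSpace K →ₗ[ℝ] _)).restrictScalars ℤ) x
      = (scalingEquiv K t₁ t₂ ht₁ ht₂).symm x from rfl]
  rw [mixedEmbedding.mem_idealLattice]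
  constructor
  · rintro ⟨y, hy, rfl⟩
    refine ⟨y, hy, ?_⟩
    exact ((scalingEquiv K t₁ t₂ ht₁ ht₂).symm_apply_apply (mixedEmbedding K y)).symm
  · rintro ⟨y, hy, hxy⟩
    refine ⟨y, hy, ?_⟩
    have := congrArg (scalingEquiv K t₁ t₂ ht₁ ht₂) hxy
    rwa [(scalingEquiv K t₁ t₂ ht₁ ht₂).apply_symm_apply] at this

/-- Lemma 5.1: for a nonzero fractional ideal `a` and positive scaling
factors `t_i`, the set `τ(σ(a))` is a lattice in `R^r × C^s` of covolume
`t₁^{d_1} ⋯ t_{r+s}^{d_{r+s}} · 2^{-s} · Na · √|Δ_K|`, whose first successive minimum with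
respect to the Euclidean unit ball is at least `(t₁^{d_1} ⋯ t_{r+s}^{d_{r+s}} · Na)^{1/d}`. -/
theorem stmt13 (a : FractionalIdeal (RingOfIntegers K)⁰ K) (ha : a ≠ 0)
    (t₁ : {w : InfinitePlace K // IsReal w} → ℝ)
    (t₂ : {w : InfinitePlace K // IsComplex w} → ℝ)
    (ht₁ : ∀ w, 0 < t₁ w) (ht₂ : ∀ w, 0 < t₂ w) :
    ∃ h₁ : DiscreteTopology (scaledIdealLattice K a t₁ t₂),
      (@IsZLattice ℝ _ _ _ _ (scaledIdealLattice K a t₁ t₂) h₁) ∧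
      ZLattice.covolume (scaledIdealLattice K a t₁ t₂) =
        (∏ w, t₁ w) * (∏ w, (t₂ w) ^ 2) * ((2 : ℝ) ^ (nrComplexPlaces K))⁻¹ *
          (FractionalIdeal.absNorm a : ℝ) * Real.sqrt |(discr K : ℝ)| ∧
      ∀ v ∈ scaledIdealLattice K a t₁ t₂, v ≠ 0 →
        Real.sqrt (euclNormSq K v) ≥
          ((∏ w, t₁ w) * (∏ w, (t₂ w) ^ 2) * (FractionalIdeal.absNorm a : ℝ)) ^
            ((Module.finrank ℚ K : ℝ))⁻¹ := by
  have ht₁' : ∀ w, t₁ w ≠ 0 := fun w => (ht₁ w).ne'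
  have ht₂' : ∀ w, t₂ w ≠ 0 := fun w => (ht₂ w).ne'
  set e := scalingEquiv K t₁ t₂ ht₁' ht₂' with he_def
  set τ := e.toContinuousLinearEquiv with hτ_def
  set I := Units.mk0 a ha with hI_def
  set L := mixedEmbedding.idealLattice K I with hL_def
  set P := (∏ w, t₁ w) * ∏ w, (t₂ w) ^ 2 with hP_def
  have hP : 0 < P := by
    apply mul_pos <;> apply Finset.prod_pos <;> intro w _
    · exact ht₁ w
    · exact pow_pos (ht₂ w) 2
  have hτsymmLM : (τ.symm.toLinearMap :
      mixedEmbedding.mixedSpace K →ₗ[ℝ] mixedEmbedding.mixedSpace K) = e.symm.toLinearMap := rfl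
  have hkey : scaledIdealLattice K a t₁ t₂ = ZLattice.comap ℝ L τ.symm.toLinearMap := by
    rw [hτsymmLM]
    exact scaledIdealLattice_eq K a ha t₁ t₂ ht₁' ht₂'
  have h₁ : DiscreteTopology (scaledIdealLattice K a t₁ t₂) := by
    rw [hkey]; infer_instance
  refine ⟨h₁, ⟨?_⟩, ?_, ?_⟩
  · -- span is top
    rw [hkey]
    exact (instIsZLatticeComap ℝ L τ.symm).span_top
  · -- covolume
    have hdet : LinearMap.det (e : mixedEmbedding.mixedSpace K →ₗ[ℝ] _) = P :=
      det_scalingEquiv K t₁ t₂ ht₁' ht₂'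
    have hdets : LinearMap.det (e.symm : mixedEmbedding.mixedSpace K →ₗ[ℝ] _) = P⁻¹ := by
      have hcomp : (e.symm : mixedEmbedding.mixedSpace K →ₗ[ℝ] _) ∘ₗ
          (e : mixedEmbedding.mixedSpace K →ₗ[ℝ] _) = LinearMap.id := by
        ext x <;> simp
      have := congrArg LinearMap.det hcomp
      rw [LinearMap.det_comp, hdet, LinearMap.det_id] at this
      field_simp at this ⊢
      linarith [this]
    set μ : Measure (mixedEmbedding.mixedSpace K) := (ENNReal.ofReal P) • volume with hμ_def
    haveI : Measure.IsAddHaarMeasure μ :=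
      Measure.IsAddHaarMeasure.smul _ (ENNReal.ofReal_pos.mpr hP).ne' ENNReal.ofReal_ne_top
    have hmp : MeasurePreserving τ.symm volume μ := by
      refine ⟨τ.symm.continuous.measurable, ?_⟩
      have hmap := Measure.map_linearMap_addHaar_eq_smul_addHaar (μ := volume)
        (f := (e.symm : mixedEmbedding.mixedSpace K →ₗ[ℝ] _))
        (by rw [hdets]; exact inv_ne_zero hP.ne')
      rw [show ⇑(e.symm : mixedEmbedding.mixedSpace K →ₗ[ℝ] _) = ⇑τ.symm from rfl] at hmap
      rw [hmap, hdets, inv_inv, abs_of_pos hP, hμ_def]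
    have hcov : ZLattice.covolume (scaledIdealLattice K a t₁ t₂) volume
        = ZLattice.covolume L μ := by
      rw [hkey]
      exact ZLattice.covolume_comap L μ volume hmp
    have hF := mixedEmbedding.fundamentalDomain_idealLattice K I
    have hsmul : ZLattice.covolume L μ = P * ZLattice.covolume L volume := by
      rw [ZLattice.covolume_eq_measure_fundamentalDomain L μ
          (hF.mono Measure.smul_absolutelyContinuous),
        ZLattice.covolume_eq_measure_fundamentalDomain L volume hF, hμ_def,
        measureReal_ennreal_smul_apply, ENNReal.toReal_ofReal hP.le]
    rw [hcov, hsmul, mixedEmbedding.covolume_idealLattice]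
    have hne : FractionalIdeal.absNorm (I : FractionalIdeal (RingOfIntegers K)⁰ K)
        = FractionalIdeal.absNorm a := rfl
    rw [hne, hP_def, inv_pow]
    push_cast
    ring
  · -- norm lower bound
    rintro v hv hv0
    rw [scaledIdealLattice, Submodule.mem_map] at hv
    obtain ⟨x, hxa, rfl⟩ := hv
    set v := (((scaling K t₁ t₂).comp (mixedEmbedding K).toAddMonoidHom).toIntLinearMap) x
      with hv_def
    have hx0 : x ≠ 0 := by
      rintro rfl
      exact hv0 (map_zero _)
    have hxa' : x ∈ a := hxa
    set d := Module.finrank ℚ K with hd_def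
    have hd0 : (d : ℝ) ≠ 0 := Nat.cast_ne_zero.mpr Module.finrank_pos.ne'
    set S := euclNormSq K v with hS_def
    have hS0 : 0 ≤ S := euclNormSq_nonneg K v
    -- normAtPlace bound
    have hnv : ∀ w : InfinitePlace K, mixedEmbedding.normAtPlace w v ≤ Real.sqrt S := by
      intro w
      by_cases hw : IsReal w
      · rw [mixedEmbedding.normAtPlace_apply_of_isReal hw]
        rw [show ‖v.1 ⟨w, hw⟩‖ = Real.sqrt ((v.1 ⟨w, hw⟩) ^ 2) by
          rw [Real.sqrt_sq_eq_abs, Real.norm_eq_abs]]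
        exact Real.sqrt_le_sqrt (sq_fst_le_euclNormSq K v ⟨w, hw⟩)
      · have hw' : IsComplex w := not_isReal_iff_isComplex.mp hw
        rw [mixedEmbedding.normAtPlace_apply_of_isComplex hw']
        rw [show ‖v.2 ⟨w, hw'⟩‖ = Real.sqrt (‖v.2 ⟨w, hw'⟩‖ ^ 2) by
          rw [Real.sqrt_sq (norm_nonneg _)]]
        exact Real.sqrt_le_sqrt (sq_snd_le_euclNormSq K v ⟨w, hw'⟩)
    have hnorm_le : mixedEmbedding.norm v ≤ Real.sqrt S ^ d := by
      rw [mixedEmbedding.norm_apply, hd_def, ← sum_mult_eq, ← Finset.prod_pow_eq_pow_sum]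
      exact Finset.prod_le_prod (fun w _ => pow_nonneg (mixedEmbedding.normAtPlace_nonneg w _) _)
        (fun w _ => pow_le_pow_left₀ (mixedEmbedding.normAtPlace_nonneg w _) (hnv w) _)
    -- norm computation
    have hreal : ∀ w : {w : InfinitePlace K // IsReal w},
        mixedEmbedding.normAtPlace w.1 v = t₁ w * (w.1 x) := by
      intro w
      rw [mixedEmbedding.normAtPlace_apply_of_isReal w.2]
      have h2 : ‖(mixedEmbedding K x).1 w‖ = w.1 x := by
        have h3 := mixedEmbedding.normAtPlace_apply w.1 x
        rw [mixedEmbedding.normAtPlace_apply_of_isReal w.2] at h3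
        exact h3
      calc ‖v.1 ⟨w.1, w.2⟩‖ = ‖t₁ w * (mixedEmbedding K x).1 w‖ := rfl
        _ = |t₁ w| * ‖(mixedEmbedding K x).1 w‖ := by
            rw [show ‖t₁ w * (mixedEmbedding K x).1 w‖
              = |t₁ w * (mixedEmbedding K x).1 w| from rfl, abs_mul, Real.norm_eq_abs]
        _ = t₁ w * w.1 x := by rw [h2, abs_of_pos (ht₁ w)]
    have hcomplex : ∀ w : {w : InfinitePlace K // IsComplex w},
        mixedEmbedding.normAtPlace w.1 v = t₂ w * (w.1 x) := by
      intro w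
      rw [mixedEmbedding.normAtPlace_apply_of_isComplex w.2]
      have h2 : ‖(mixedEmbedding K x).2 w‖ = w.1 x := by
        have h3 := mixedEmbedding.normAtPlace_apply w.1 x
        rw [mixedEmbedding.normAtPlace_apply_of_isComplex w.2] at h3
        exact h3
      calc ‖v.2 ⟨w.1, w.2⟩‖ = ‖(t₂ w : ℂ) * (mixedEmbedding K x).2 w‖ := rfl
        _ = |t₂ w| * ‖(mixedEmbedding K x).2 w‖ := by
            rw [norm_mul, Complex.norm_real, Real.norm_eq_abs]
        _ = t₂ w * w.1 x := by rw [h2, abs_of_pos (ht₂ w)]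
    have hnorm_eq : mixedEmbedding.norm v = P * |((Algebra.norm ℚ x : ℚ) : ℝ)| := by
      calc mixedEmbedding.norm v
          = (∏ w : {w : InfinitePlace K // IsReal w}, t₁ w * w.1 x) *
            ∏ w : {w : InfinitePlace K // IsComplex w}, (t₂ w * w.1 x) ^ 2 := by
            rw [mixedEmbedding.norm_apply,
              prod_mult_split K (fun w => mixedEmbedding.normAtPlace w v)]
            exact congrArg₂ (· * ·) (Finset.prod_congr rfl fun w _ => hreal w)
              (Finset.prod_congr rfl fun w _ => by rw [hcomplex w])
        _ = P * ((∏ w : {w : InfinitePlace K // IsReal w}, w.1 x) *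
            ∏ w : {w : InfinitePlace K // IsComplex w}, (w.1 x) ^ 2) := by
            simp_rw [mul_pow, Finset.prod_mul_distrib, hP_def]
            ring
        _ = P * |((Algebra.norm ℚ x : ℚ) : ℝ)| := by
            rw [← prod_mult_split K (fun w => w x), prod_eq_abs_norm, Rat.cast_abs]
    have hNa : (FractionalIdeal.absNorm a : ℝ) ≤ |((Algebra.norm ℚ x : ℚ) : ℝ)| := by
      rw [← Rat.cast_abs]
      exact_mod_cast absNorm_le_of_mem K ha hxa' hx0
    have hkey2 : P * (FractionalIdeal.absNorm a : ℝ) ≤ Real.sqrt S ^ d := by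
      calc P * (FractionalIdeal.absNorm a : ℝ)
          ≤ P * |((Algebra.norm ℚ x : ℚ) : ℝ)| := mul_le_mul_of_nonneg_left hNa hP.le
        _ = mixedEmbedding.norm v := hnorm_eq.symm
        _ ≤ Real.sqrt S ^ d := hnorm_le
    have h1 : (0:ℝ) ≤ P * (FractionalIdeal.absNorm a : ℝ) :=
      mul_nonneg hP.le (by exact_mod_cast FractionalIdeal.absNorm_nonneg a)
    rw [ge_iff_le]
    calc (P * (FractionalIdeal.absNorm a : ℝ)) ^ ((d : ℝ))⁻¹
        ≤ (Real.sqrt S ^ d) ^ ((d : ℝ))⁻¹ := by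
          exact Real.rpow_le_rpow h1 hkey2 (by positivity)
      _ = Real.sqrt S := by
          rw [← Real.rpow_natCast (Real.sqrt S) d, ← Real.rpow_mul (Real.sqrt_nonneg _),
            mul_inv_cancel₀ hd0, Real.rpow_one]
end
end
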